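/- For all ranked optimization problems P and Q (both interpreted as CO problems or both interpreted as ASO problems) and every rank interval [1,j], P ≡^{s,[1,j]} Q if and only if: (1) μ(P) = μ(Q); (2) (>^P)_{μ(P)} = (>^Q)_{μ(Q)}; and (3) for every I, J ∈ μ(P), either diff^P(I,J) = diff^Q(I,J), or both diff^P(I,J) > j and diff^Q(I,J) > j. -/

import Mathlib

open scoped Classical

/-- Propositional formulas over a universe `U` of atoms, built from atoms,
`⊥`, conjunction, disjunction and implication. -/
inductive Formula (U : Type) : Type where
  | atom : U → Formula U
  | bot  : Formula U
  | conj : Formula U → Formula U → Formula U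
  | disj : Formula U → Formula U → Formula U
  | imp  : Formula U → Formula U → Formula U

variable {U : Type}

/-- Classical satisfaction `I ⊨ φ`. -/
def Sat (I : Set U) : Formula U → Prop
  | .atom a => a ∈ I
  | .bot => False
  | .conj φ ψ => Sat I φ ∧ Sat I ψ
  | .disj φ ψ => Sat I φ ∨ Sat I ψ
  | .imp φ ψ => Sat I φ → Sat I ψ

/-- Classical satisfaction of a theory. -/
def SatTheory (I : Set U) (T : Set (Formula U)) : Prop := ∀ φ ∈ T, Sat I φ

/-- `Mod T`: the classical models of a theory `T`. -/
def models (T : Set (Formula U)) : Set (Set U) := {I | SatTheory I T}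

/-- HT-satisfaction `⟨I, J⟩ ⊨_HT φ` (for `I ⊆ J`). -/
def SatHT (I J : Set U) : Formula U → Prop
  | .atom a => a ∈ I
  | .bot => False
  | .conj φ ψ => SatHT I J φ ∧ SatHT I J ψ
  | .disj φ ψ => SatHT I J φ ∨ SatHT I J ψ
  | .imp φ ψ => Sat J (Formula.imp φ ψ) ∧ (¬ SatHT I J φ ∨ SatHT I J ψ)

/-- HT-satisfaction of a theory. -/
def SatHTTheory (I J : Set U) (T : Set (Formula U)) : Prop := ∀ φ ∈ T, SatHT I J φ

/-- `HT T`: the set of HT-models `⟨I,J⟩` (with `I ⊆ J`) of a theory `T`. -/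
def HTmod (T : Set (Formula U)) : Set (Set U × Set U) :=
  {p | p.1 ⊆ p.2 ∧ SatHTTheory p.1 p.2 T}

/-- `AS T`: the equilibrium models (answer sets) of a theory `T`. -/
def AS (T : Set (Formula U)) : Set (Set U) :=
  {I | SatHTTheory I I T ∧ ∀ J : Set U, J ⊂ I → ¬ SatHTTheory J I T}

/-- A ranked preference rule `φ₁ > ⋯ > φₖ ←ʲ ψ` with nonempty head and rank `j ≥ 1`. -/
structure Rule (U : Type) : Type where
  head : List (Formula U)
  body : Formula U
  rank : ℕ
  head_ne : head ≠ []
  rank_pos : 1 ≤ rank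

/-- Satisfaction degree `v_I(r)`: the least (1-based) index of a satisfied head formula
if `I` satisfies the body and some head formula; `1` otherwise. -/
noncomputable def degree (I : Set U) (r : Rule U) : ℕ :=
  if Sat I r.body ∧ ∃ φ ∈ r.head, Sat I φ then
    sInf {n : ℕ | ∃ k : Fin r.head.length, n = k.1 + 1 ∧ Sat I (r.head.get k)}
  else 1

/-- The strict preference `I >^S J` induced by a selector `S`. -/
def gtSel (S : Set (Rule U)) (I J : Set U) : Prop :=
  ∃ r' ∈ S, degree I r' < degree J r' ∧
    (∀ r ∈ S, r.rank = r'.rank → degree I r ≤ degree J r) ∧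
    (∀ r ∈ S, r.rank < r'.rank → degree I r = degree J r)

/-- The indifference `I ≈^S J` induced by a selector `S`. -/
def simSel (S : Set (Rule U)) (I J : Set U) : Prop :=
  ∀ r ∈ S, degree I r = degree J r

/-- The preference `I ≥^S J` induced by a selector `S`. -/
def geSel (S : Set (Rule U)) (I J : Set U) : Prop :=
  simSel S I J ∨ gtSel S I J

/-- An optimization problem: a generator theory plus a finite selector. -/
structure OptProblem (U : Type) : Type where
  gen : Set (Formula U)
  sel : Set (Rule U)
  sel_finite : sel.Finite

/-- Union of optimization problems. -/
def OptProblem.union (P Q : OptProblem U) : OptProblem U :=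
  ⟨P.gen ∪ Q.gen, P.sel ∪ Q.sel, P.sel_finite.union Q.sel_finite⟩

/-- `P_{<i}`: the restriction of `P` to preference rules of rank `< i`. -/
def OptProblem.below (P : OptProblem U) (i : ℕ) : OptProblem U :=
  ⟨P.gen, {r ∈ P.sel | r.rank < i}, P.sel_finite.subset (Set.sep_subset _ _)⟩

/-- The two semantics for generators: classical (CO problems) and
equilibrium-model/answer-set (ASO problems). -/
inductive Sem : Type where
  | co : Sem
  | aso : Sem

/-- `μ(P)`: the outcomes of `P` under the chosen semantics. -/
def outcomes (sem : Sem) (P : OptProblem U) : Set (Set U) :=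
  match sem with
  | Sem.co => models P.gen
  | Sem.aso => AS P.gen

/-- `π(P)`: the preferred (optimal) outcomes of `P`. -/
def pref (sem : Sem) (P : OptProblem U) : Set (Set U) :=
  {I | I ∈ outcomes sem P ∧ ¬ ∃ J ∈ outcomes sem P, gtSel P.sel J I}

/-- `diff^P(I,J)`: the largest `k` with `I ≈^{P_{<k}} J` (`∞` if this holds for all `k`). -/
noncomputable def diff (P : OptProblem U) (I J : Set U) : ℕ∞ :=
  if ∀ k : ℕ, simSel (P.below k).sel I J then ⊤
  else ((sSup {k : ℕ | simSel (P.below k).sel I J} : ℕ) : ℕ∞)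

/-- Restriction `≻_V` of a relation on interpretations to a set `V` of interpretations. -/
def restrictRel (rel : Set U → Set U → Prop) (V : Set (Set U)) : Set U → Set U → Prop :=
  fun A B => rel A B ∧ A ∈ V ∧ B ∈ V

/-- All rules of `S` have rank in the interval `[i,j]` (`j` may be `∞`). -/
def inRankInterval (i : ℕ) (j : ℕ∞) (S : Set (Rule U)) : Prop :=
  ∀ r ∈ S, i ≤ r.rank ∧ (r.rank : ℕ∞) ≤ j

/-- Strong sel-equivalence `P ≡^{s,[i,j]} Q`: same preferred outcomes under addition of any
context from `L^{s,[i,j]}` (empty generator, selector with ranks in `[i,j]`). -/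
def seqv (sem : Sem) (i : ℕ) (j : ℕ∞) (P Q : OptProblem U) : Prop :=
  ∀ R : OptProblem U, R.gen = ∅ → inRankInterval i j R.sel →
    pref sem (P.union R) = pref sem (Q.union R)

/-- Strong gen-equivalence `P ≡_g Q`: same preferred outcomes under addition of any
generator context from `L^g` (empty selector). -/
def geqv (sem : Sem) (P Q : OptProblem U) : Prop :=
  ∀ R : OptProblem U, R.sel = ∅ →
    pref sem (P.union R) = pref sem (Q.union R)

/-- Strong (combined) equivalence `P ≡^{s,[i,j]}_g Q`: same preferred outcomes under addition
of any context from `L^{[i,j]}` (arbitrary generator, selector with ranks in `[i,j]`). -/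
def sgeqv (sem : Sem) (i : ℕ) (j : ℕ∞) (P Q : OptProblem U) : Prop :=
  ∀ R : OptProblem U, inRankInterval i j R.sel →
    pref sem (P.union R) = pref sem (Q.union R)

section Aux
variable {U : Type}

def FTop {U : Type} : Formula U := Formula.imp Formula.bot Formula.bot
def FNeg {U : Type} (φ : Formula U) : Formula U := Formula.imp φ Formula.bot

lemma sat_top (I : Set U) : Sat I (FTop : Formula U) := fun h => h

def Epred (P : OptProblem U) (I J : Set U) (m : ℕ) : Prop :=
  ∀ r ∈ P.sel, r.rank < m → degree I r = degree J r

lemma simSel_below_iff (P : OptProblem U) (I J : Set U) (m : ℕ) :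
    simSel (P.below m).sel I J ↔ Epred P I J m := by
  constructor
  · intro h r hr hrk; exact h r ⟨hr, hrk⟩
  · rintro h r ⟨hr, hrk⟩; exact h r hr hrk

lemma Epred_anti (P : OptProblem U) (I J : Set U) {m n : ℕ} (h : m ≤ n)
    (hn : Epred P I J n) : Epred P I J m :=
  fun r hr hrk => hn r hr (lt_of_lt_of_le hrk h)

lemma Epred_symm {P : OptProblem U} {I J : Set U} {m : ℕ} (h : Epred P I J m) :
    Epred P J I m := fun r hr hrk => (h r hr hrk).symm

lemma Epred_iff_le_diff (P : OptProblem U) (I J : Set U) (m : ℕ) :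
    Epred P I J m ↔ (m : ℕ∞) ≤ diff P I J := by
  unfold diff
  by_cases h : ∀ k : ℕ, simSel (P.below k).sel I J
  · rw [if_pos h]
    simp only [le_top, iff_true]
    exact (simSel_below_iff P I J m).mp (h m)
  · rw [if_neg h]
    push_neg at h
    obtain ⟨k₀, hk₀⟩ := h
    rw [simSel_below_iff] at hk₀
    have hset : {k : ℕ | simSel (P.below k).sel I J} = {k : ℕ | Epred P I J k} :=
      Set.ext fun k => simSel_below_iff P I J k
    rw [hset]
    have hbdd : BddAbove {k : ℕ | Epred P I J k} :=
      ⟨k₀, fun k hk => le_of_not_gt fun hlt => hk₀ (Epred_anti P I J (le_of_lt hlt) hk)⟩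
    have hne : {k : ℕ | Epred P I J k}.Nonempty :=
      ⟨0, fun r hr hrk => absurd hrk (by omega)⟩
    have hmem : sSup {k : ℕ | Epred P I J k} ∈ {k : ℕ | Epred P I J k} :=
      Nat.sSup_mem hne hbdd
    constructor
    · intro hE; exact_mod_cast le_csSup hbdd hE
    · intro hle; exact Epred_anti P I J (Nat.cast_le.mp hle) hmem

lemma diff_symm (P : OptProblem U) (I J : Set U) : diff P I J = diff P J I := by
  have hs : ∀ k, simSel (P.below k).sel I J ↔ simSel (P.below k).sel J I :=
    fun k => ⟨fun h r hr => (h r hr).symm, fun h r hr => (h r hr).symm⟩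
  unfold diff
  rw [show (∀ k : ℕ, simSel (P.below k).sel I J) = (∀ k : ℕ, simSel (P.below k).sel J I) from
    propext (forall_congr' hs)]
  rw [show {k : ℕ | simSel (P.below k).sel I J} = {k : ℕ | simSel (P.below k).sel J I} from
    Set.ext hs]

lemma diff_eq_coe {P : OptProblem U} {I J : Set U} {m : ℕ}
    (hE : Epred P I J m) (hNE : ¬ Epred P I J (m + 1)) : diff P I J = (m : ℕ∞) := by
  have h1 : (m : ℕ∞) ≤ diff P I J := (Epred_iff_le_diff P I J m).mp hE
  have h2 : ¬ ((m + 1 : ℕ) : ℕ∞) ≤ diff P I J :=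
    fun h => hNE ((Epred_iff_le_diff P I J (m + 1)).mpr h)
  have h3 : diff P I J < ((m + 1 : ℕ) : ℕ∞) := lt_of_not_ge h2
  have h4 : diff P I J ≤ (m : ℕ∞) := by
    push_cast at h3
    exact (ENat.lt_add_one_iff (ENat.coe_ne_top m)).mp h3
  exact le_antisymm h4 h1

lemma Epred_of_diff_eq {P : OptProblem U} {I J : Set U} {m : ℕ} {d : ℕ∞}
    (hd : diff P I J = d) (h : (m : ℕ∞) ≤ d) : Epred P I J m :=
  (Epred_iff_le_diff P I J m).mpr (hd ▸ h)
end Aux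
section AuxDeg
variable {U : Type}

lemma degree_pos (I : Set U) (r : Rule U) : 1 ≤ degree I r := by
  unfold degree
  split
  · rename_i h
    obtain ⟨hb, φ, hφ, hs⟩ := h
    obtain ⟨k, hk⟩ := List.mem_iff_get.mp hφ
    have hne : {n : ℕ | ∃ k : Fin r.head.length, n = k.1 + 1 ∧ Sat I (r.head.get k)}.Nonempty :=
      ⟨k.1 + 1, k, rfl, hk ▸ hs⟩
    obtain ⟨k', hk', _⟩ := Nat.sInf_mem hne
    omega
  · exact le_refl 1

lemma degree_congr (I C : Set U) (r : Rule U)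
    (hb : Sat I r.body ↔ Sat C r.body)
    (hh : ∀ φ ∈ r.head, (Sat I φ ↔ Sat C φ)) : degree I r = degree C r := by
  unfold degree
  have hc : (Sat I r.body ∧ ∃ φ ∈ r.head, Sat I φ) ↔ (Sat C r.body ∧ ∃ φ ∈ r.head, Sat C φ) := by
    constructor
    · rintro ⟨h1, φ, h2, h3⟩; exact ⟨hb.mp h1, φ, h2, (hh φ h2).mp h3⟩
    · rintro ⟨h1, φ, h2, h3⟩; exact ⟨hb.mpr h1, φ, h2, (hh φ h2).mpr h3⟩
  have hs : {n : ℕ | ∃ k : Fin r.head.length, n = k.1 + 1 ∧ Sat I (r.head.get k)} =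
      {n : ℕ | ∃ k : Fin r.head.length, n = k.1 + 1 ∧ Sat C (r.head.get k)} := by
    ext n
    constructor
    · rintro ⟨k, h1, h2⟩; exact ⟨k, h1, (hh _ (r.head.get_mem k)).mp h2⟩
    · rintro ⟨k, h1, h2⟩; exact ⟨k, h1, (hh _ (r.head.get_mem k)).mpr h2⟩
  by_cases h : Sat I r.body ∧ ∃ φ ∈ r.head, Sat I φ
  · rw [if_pos h, if_pos (hc.mp h), hs]
  · rw [if_neg h, if_neg (fun hc' => h (hc.mpr hc'))]

noncomputable def ruleOf (φ : Formula U) (m : ℕ) (hm : 1 ≤ m) : Rule U :=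
  ⟨[φ, FNeg φ], FTop, m, by simp, hm⟩

lemma degree_ruleOf (I : Set U) (φ : Formula U) (m : ℕ) (hm : 1 ≤ m) :
    degree I (ruleOf φ m hm) = if Sat I φ then 1 else 2 := by
  unfold degree ruleOf
  simp only
  by_cases h : Sat I φ
  · rw [if_pos ⟨sat_top I, φ, by simp, h⟩, if_pos h]
    have h1 : 1 ∈ {n : ℕ | ∃ k : Fin ([φ, FNeg φ] : List (Formula U)).length, n = k.1 + 1 ∧ Sat I ([φ, FNeg φ].get k)} := ⟨⟨0, by simp⟩, rfl, h⟩
    have : sInf {n : ℕ | ∃ k : Fin ([φ, FNeg φ] : List (Formula U)).length, n = k.1 + 1 ∧ Sat I ([φ, FNeg φ].get k)} ≤ 1 := Nat.sInf_le h1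
    obtain ⟨k, hk, _⟩ := Nat.sInf_mem (⟨1, h1⟩ : Set.Nonempty _)
    omega
  · have hneg : Sat I (FNeg φ) := fun hφ => h hφ
    rw [if_pos ⟨sat_top I, FNeg φ, by simp, hneg⟩, if_neg h]
    have hset : {n : ℕ | ∃ k : Fin ([φ, FNeg φ] : List (Formula U)).length, n = k.1 + 1 ∧ Sat I ([φ, FNeg φ].get k)} = {2} := by
      ext n
      simp only [Set.mem_setOf_eq, Set.mem_singleton_iff]
      constructor
      · rintro ⟨⟨k, hk⟩, h1, h2⟩
        simp only [List.length] at hk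
        match k, hk with
        | 0, _ => exact absurd h2 h
        | 1, _ => exact h1
      · rintro rfl; exact ⟨⟨1, by simp⟩, rfl, hneg⟩
    rw [hset]
    simp
end AuxDeg
section AuxPhi
variable {U : Type}

def ruleForms (r : Rule U) : List (Formula U) := r.body :: r.head

def allForms : List (Rule U) → List (Formula U)
  | [] => []
  | r :: rs => ruleForms r ++ allForms rs

lemma mem_allForms {φ : Formula U} {l : List (Rule U)} :
    φ ∈ allForms l ↔ ∃ r ∈ l, φ ∈ ruleForms r := by
  induction l with
  | nil => simp [allForms]
  | cons r rs ih => simp [allForms, ih]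

noncomputable def formList (P Q : OptProblem U) : List (Formula U) :=
  allForms (P.sel_finite.union Q.sel_finite).toFinset.toList

lemma mem_formList {P Q : OptProblem U} {r : Rule U} (hr : r ∈ P.sel ∪ Q.sel)
    {φ : Formula U} (hφ : φ ∈ ruleForms r) : φ ∈ formList P Q := by
  apply mem_allForms.mpr
  refine ⟨r, ?_, hφ⟩
  rw [Finset.mem_toList, Set.Finite.mem_toFinset]
  exact hr

def mkConj : List (Formula U) → Formula U := List.foldr Formula.conj FTop

lemma sat_mkConj (I : Set U) (l : List (Formula U)) :
    Sat I (mkConj l) ↔ ∀ φ ∈ l, Sat I φ := by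
  induction l with
  | nil => simp [mkConj, List.foldr, Sat, sat_top]
  | cons a l ih =>
    simp only [mkConj, List.foldr] at ih ⊢
    show Sat I a ∧ Sat I _ ↔ _
    rw [ih]
    simp

noncomputable def signed (A : Set U) (φ : Formula U) : Formula U :=
  if Sat A φ then φ else FNeg φ

lemma sat_signed (C A : Set U) (φ : Formula U) :
    Sat C (signed A φ) ↔ (Sat C φ ↔ Sat A φ) := by
  unfold signed
  by_cases h : Sat A φ
  · rw [if_pos h]; tauto
  · rw [if_neg h]
    show (Sat C φ → False) ↔ _
    tauto

noncomputable def Dform (P Q : OptProblem U) (A : Set U) : Formula U :=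
  mkConj ((formList P Q).map (signed A))

lemma sat_Dform {P Q : OptProblem U} (C A : Set U) :
    Sat C (Dform P Q A) ↔ ∀ φ ∈ formList P Q, (Sat C φ ↔ Sat A φ) := by
  unfold Dform
  rw [sat_mkConj]
  constructor
  · intro h φ hφ
    exact (sat_signed C A φ).mp (h _ (List.mem_map_of_mem hφ))
  · intro h ψ hψ
    obtain ⟨φ, hφ, rfl⟩ := List.mem_map.mp hψ
    exact (sat_signed C A φ).mpr (h φ hφ)

lemma sat_Dform_self (P Q : OptProblem U) (A : Set U) : Sat A (Dform P Q A) :=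
  (sat_Dform A A).mpr (fun _ _ => Iff.rfl)

lemma degree_eq_of_Dform {P Q : OptProblem U} {C A : Set U}
    (h : Sat C (Dform P Q A)) {r : Rule U} (hr : r ∈ P.sel ∪ Q.sel) :
    degree C r = degree A r := by
  rw [sat_Dform] at h
  exact degree_congr C A r
    (h r.body (mem_formList hr (List.mem_cons_self)))
    (fun φ hφ => h φ (mem_formList hr (List.mem_cons_of_mem _ hφ)))

lemma sat_Dform_trans {P Q : OptProblem U} {C I A : Set U}
    (h : Sat C (Dform P Q I)) : Sat C (Dform P Q A) ↔ Sat I (Dform P Q A) := by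
  rw [sat_Dform] at h
  rw [sat_Dform, sat_Dform]
  constructor
  · intro h2 φ hφ; rw [← h φ hφ]; exact h2 φ hφ
  · intro h2 φ hφ; rw [h φ hφ]; exact h2 φ hφ

end AuxPhi

section AuxPref
variable {U : Type}

lemma outcomes_union_empty (sem : Sem) (P R : OptProblem U) (h : R.gen = ∅) :
    outcomes sem (P.union R) = outcomes sem P := by
  cases sem
  · show models (P.gen ∪ R.gen) = models P.gen
    rw [h, Set.union_empty]
  · show AS (P.gen ∪ R.gen) = AS P.gen
    rw [h, Set.union_empty]

lemma mem_pref_union {sem : Sem} {P R : OptProblem U} (h : R.gen = ∅) (I : Set U) :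
    I ∈ pref sem (P.union R) ↔
      I ∈ outcomes sem P ∧ ¬ ∃ J ∈ outcomes sem P, gtSel (P.sel ∪ R.sel) J I := by
  unfold pref
  rw [Set.mem_setOf_eq, outcomes_union_empty sem P R h]
  rfl

end AuxPref
section AuxFwd
variable {U : Type}

/-- A context consisting of a single rule. -/
noncomputable def ctx1 (r : Rule U) : OptProblem U :=
  ⟨∅, {r}, Set.finite_singleton r⟩

/-- A context consisting of two rules. -/
noncomputable def ctx2 (r s : Rule U) : OptProblem U :=
  ⟨∅, {r, s}, (Set.finite_singleton s).insert r⟩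

lemma part1 {sem : Sem} {j : ℕ∞} (hj : (1 : ℕ∞) ≤ j) {P Q : OptProblem U}
    (hseqv : seqv sem 1 j P Q) : outcomes sem P ⊆ outcomes sem Q := by
  intro I hI
  set D := Dform P Q I with hD
  set rD : Rule U := ruleOf D 1 le_rfl with hrD
  have hrank : rD.rank = 1 := rfl
  have hint : inRankInterval 1 j (ctx1 rD).sel := by
    rintro r hr
    obtain rfl : r = rD := hr
    exact ⟨le_rfl, by rw [hrank]; exact_mod_cast hj⟩
  have hdegI : degree I rD = 1 := by
    rw [hrD, degree_ruleOf, if_pos (sat_Dform_self P Q I)]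
  have hpref : I ∈ pref sem (P.union (ctx1 rD)) := by
    rw [mem_pref_union rfl]
    refine ⟨hI, ?_⟩
    rintro ⟨C, hC, w, hw, hlt, hsame, hlow⟩
    have hCD : Sat C D := by
      rcases hw with hwP | hwR
      · have hrw : 1 ≤ w.rank := w.rank_pos
        have hCle : degree C rD ≤ 1 := by
          rcases eq_or_lt_of_le hrw with heq | hlt1
          · have := hsame rD (Or.inr rfl) (by rw [hrank, heq])
            rwa [hdegI] at this
          · have := hlow rD (Or.inr rfl) (by rw [hrank]; exact hlt1)
            rw [hdegI] at this
            exact le_of_eq this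
        have := degree_pos C rD
        have hC1 : degree C rD = 1 := le_antisymm hCle this
        rw [hrD, degree_ruleOf] at hC1
        by_contra hnot
        rw [if_neg hnot] at hC1
        omega
      · obtain rfl : w = rD := hwR
        rw [hdegI] at hlt
        exact absurd (lt_of_le_of_lt (degree_pos C rD) hlt) (lt_irrefl 1)
    rcases hw with hwP | hwR
    · have := degree_eq_of_Dform hCD (Or.inl hwP)
      rw [this] at hlt
      exact lt_irrefl _ hlt
    · obtain rfl : w = rD := hwR
      rw [hdegI] at hlt
      exact absurd (lt_of_le_of_lt (degree_pos C rD) hlt) (lt_irrefl 1)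
  rw [hseqv (ctx1 rD) rfl hint] at hpref
  rw [mem_pref_union rfl] at hpref
  exact hpref.1

lemma part2 {sem : Sem} {j : ℕ∞} (hj : (1 : ℕ∞) ≤ j) {P Q : OptProblem U}
    (hseqv : seqv sem 1 j P Q) (hμ : outcomes sem P = outcomes sem Q)
    {A B : Set U} (hA : A ∈ outcomes sem P) (hB : B ∈ outcomes sem P)
    (hgt : gtSel P.sel B A) : gtSel Q.sel B A := by
  set D : Formula U := (Dform P Q A).disj (Dform P Q B) with hD
  set rD : Rule U := ruleOf D 1 le_rfl with hrD
  have hrank : rD.rank = 1 := rfl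
  have hint : inRankInterval 1 j (ctx1 rD).sel := by
    rintro r hr
    obtain rfl : r = rD := hr
    exact ⟨le_rfl, by rw [hrank]; exact_mod_cast hj⟩
  have hdegA : degree A rD = 1 := by
    rw [hrD, degree_ruleOf, if_pos (show Sat A D from Or.inl (sat_Dform_self P Q A))]
  have hdegB : degree B rD = 1 := by
    rw [hrD, degree_ruleOf, if_pos (show Sat B D from Or.inr (sat_Dform_self P Q B))]
  -- B dominates A in P ∪ {rD}
  have hdom : gtSel (P.sel ∪ (ctx1 rD).sel) B A := by
    obtain ⟨w, hw, hlt, hsame, hlow⟩ := hgt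
    refine ⟨w, Or.inl hw, hlt, ?_, ?_⟩
    · rintro r (hrP | hrR) hrk
      · exact hsame r hrP hrk
      · obtain rfl : r = rD := hrR
        rw [hdegA, hdegB]
    · rintro r (hrP | hrR) hrk
      · exact hlow r hrP hrk
      · obtain rfl : r = rD := hrR
        rw [hdegA, hdegB]
  have hnpref : A ∉ pref sem (P.union (ctx1 rD)) := by
    rw [mem_pref_union rfl]
    rintro ⟨_, hno⟩
    exact hno ⟨B, hB, hdom⟩
  rw [hseqv (ctx1 rD) rfl hint] at hnpref
  rw [mem_pref_union rfl] at hnpref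
  push_neg at hnpref
  obtain ⟨C, hC, w, hw, hlt, hsame, hlow⟩ := hnpref (hμ ▸ hA)
  -- w cannot be rD
  have hwQ : w ∈ Q.sel := by
    rcases hw with hwQ | hwR
    · exact hwQ
    · obtain rfl : w = rD := hwR
      rw [hdegA] at hlt
      exact absurd (lt_of_le_of_lt (degree_pos C rD) hlt) (lt_irrefl 1)
  -- C satisfies D
  have hCD : Sat C D := by
    have hrw : 1 ≤ w.rank := w.rank_pos
    have hCle : degree C rD ≤ 1 := by
      rcases eq_or_lt_of_le hrw with heq | hlt1
      · have := hsame rD (Or.inr rfl) (by rw [hrank, heq])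
        rwa [hdegA] at this
      · have := hlow rD (Or.inr rfl) (by rw [hrank]; exact hlt1)
        rw [hdegA] at this
        exact le_of_eq this
    have hC1 : degree C rD = 1 := le_antisymm hCle (degree_pos C rD)
    rw [hrD, degree_ruleOf] at hC1
    by_contra hnot
    rw [if_neg hnot] at hC1
    omega
  rcases hCD with hCA | hCB
  · -- C in class of A: contradiction with strictness
    have := degree_eq_of_Dform hCA (Or.inr hwQ)
    rw [this] at hlt
    exact absurd hlt (lt_irrefl _)
  · -- C in class of B: transfer witness to B
    refine ⟨w, hwQ, ?_, ?_, ?_⟩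
    · rw [← degree_eq_of_Dform hCB (Or.inr hwQ)]
      exact hlt
    · intro r hr hrk
      rw [← degree_eq_of_Dform hCB (Or.inr hr)]
      exact hsame r (Or.inl hr) hrk
    · intro r hr hrk
      rw [← degree_eq_of_Dform hCB (Or.inr hr)]
      exact hlow r (Or.inl hr) hrk

end AuxFwd
section AuxP3
variable {U : Type}

lemma part3core {sem : Sem} {j : ℕ∞} (hj : (1 : ℕ∞) ≤ j) {P Q : OptProblem U}
    (hseqv : seqv sem 1 j P Q) (hμ : outcomes sem P = outcomes sem Q)
    {I J : Set U} (hI : I ∈ outcomes sem P) (hJ : J ∈ outcomes sem P)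
    {m : ℕ} (hm1 : 1 ≤ m) (hmj : (m : ℕ∞) ≤ j)
    (hE : Epred P I J m) (hEQ : Epred Q I J (m + 1))
    {r1 : Rule U} (hr1P : r1 ∈ P.sel) (hr1m : r1.rank = m)
    (hr1 : degree I r1 < degree J r1) : False := by
  set DI : Formula U := Dform P Q I with hDI
  set DJ : Formula U := Dform P Q J with hDJ
  set rS : Rule U := ruleOf (DI.disj DJ) 1 le_rfl with hrS
  set rM : Rule U := ruleOf DJ m hm1 with hrM
  have hrankS : rS.rank = 1 := rfl
  have hrankM : rM.rank = m := rfl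
  set R : OptProblem U := ctx2 rS rM with hR
  have hmem : ∀ r : Rule U, r ∈ R.sel ↔ r = rS ∨ r = rM := fun r => Set.mem_insert_iff
  have hint : inRankInterval 1 j R.sel := by
    intro r hr
    rcases (hmem r).mp hr with rfl | rfl
    · exact ⟨le_rfl, by rw [hrankS]; exact_mod_cast hj⟩
    · exact ⟨by rw [hrankM]; exact hm1, by rw [hrankM]; exact hmj⟩
  -- degrees on the new rules
  have hIDJ : ¬ Sat I DJ := by
    intro h
    have := degree_eq_of_Dform h (Or.inl hr1P)
    omega
  have hJDJ : Sat J DJ := sat_Dform_self P Q J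
  have dI_rS : degree I rS = 1 := by
    rw [hrS, degree_ruleOf, if_pos (show Sat I (DI.disj DJ) from Or.inl (sat_Dform_self P Q I))]
  have dJ_rS : degree J rS = 1 := by
    rw [hrS, degree_ruleOf, if_pos (show Sat J (DI.disj DJ) from Or.inr hJDJ)]
  have dI_rM : degree I rM = 2 := by
    rw [hrM, degree_ruleOf, if_neg hIDJ]
  have dJ_rM : degree J rM = 1 := by
    rw [hrM, degree_ruleOf, if_pos hJDJ]
  -- J dominates I in Q ∪ R
  have hdom : gtSel (Q.sel ∪ R.sel) J I := by
    refine ⟨rM, Or.inr ((hmem rM).mpr (Or.inr rfl)), by rw [dI_rM, dJ_rM]; omega, ?_, ?_⟩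
    · rintro r (hrQ | hrR) hrk
      · rw [hrankM] at hrk
        exact le_of_eq (hEQ r hrQ (by omega)).symm
      · rcases (hmem r).mp hrR with rfl | rfl
        · rw [dI_rS, dJ_rS]
        · rw [dI_rM, dJ_rM]; omega
    · rintro r (hrQ | hrR) hrk
      · rw [hrankM] at hrk
        exact (hEQ r hrQ (by omega)).symm
      · rcases (hmem r).mp hrR with rfl | rfl
        · rw [dI_rS, dJ_rS]
        · rw [hrankM] at hrk; omega
  have hnpref : I ∉ pref sem (Q.union R) := by
    rw [mem_pref_union rfl]
    rintro ⟨_, hno⟩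
    exact hno ⟨J, hμ ▸ hJ, hdom⟩
  rw [← hseqv R rfl hint] at hnpref
  rw [mem_pref_union rfl] at hnpref
  push_neg at hnpref
  obtain ⟨C, hC, w, hw, hlt, hsame, hlow⟩ := hnpref hI
  -- C satisfies DI ∨ DJ
  have hCD : Sat C (DI.disj DJ) := by
    have hrw : 1 ≤ w.rank := w.rank_pos
    have hCle : degree C rS ≤ 1 := by
      rcases eq_or_lt_of_le hrw with heq | hlt1
      · have := hsame rS (Or.inr ((hmem rS).mpr (Or.inl rfl))) (by rw [hrankS, heq])
        rwa [dI_rS] at this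
      · have := hlow rS (Or.inr ((hmem rS).mpr (Or.inl rfl))) (by rw [hrankS]; exact hlt1)
        rw [dI_rS] at this
        exact le_of_eq this
    have hC1 : degree C rS = 1 := le_antisymm hCle (degree_pos C rS)
    rw [hrS, degree_ruleOf] at hC1
    by_contra hnot
    rw [if_neg hnot] at hC1
    omega
  rcases hCD with hCI | hCJ
  · -- C is in the class of I : all degrees equal, contradiction with strictness
    have hdeg : ∀ r ∈ P.sel ∪ R.sel, degree C r = degree I r := by
      rintro r (hrP | hrR)
      · exact degree_eq_of_Dform hCI (Or.inl hrP)
      · rcases (hmem r).mp hrR with rfl | rfl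
        · rw [dI_rS, hrS, degree_ruleOf,
            if_pos (show Sat C (DI.disj DJ) from Or.inl hCI)]
        · have hCDJ : ¬ Sat C DJ := fun h => hIDJ ((sat_Dform_trans hCI).mp h)
          rw [dI_rM, hrM, degree_ruleOf, if_neg hCDJ]
    rw [hdeg w hw] at hlt
    exact lt_irrefl _ hlt
  · -- C is in the class of J
    have hdegJ : ∀ r ∈ P.sel ∪ Q.sel, degree C r = degree J r :=
      fun r hr => degree_eq_of_Dform hCJ hr
    have dC_rM : degree C rM = 1 := by
      rw [hrM, degree_ruleOf, if_pos hCJ]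
    rcases hw with hwP | hwR
    · rcases lt_trichotomy w.rank m with hcmp | hcmp | hcmp
      · have h1 := hE w hwP (by omega)
        have h2 := hdegJ w (Or.inl hwP)
        omega
      · have := hsame r1 (Or.inl hr1P) (by rw [hr1m, hcmp])
        have h2 := hdegJ r1 (Or.inl hr1P)
        omega
      · have := hlow rM (Or.inr ((hmem rM).mpr (Or.inr rfl))) (by rw [hrankM]; exact hcmp)
        rw [dC_rM, dI_rM] at this
        omega
    · rcases (hmem w).mp hwR with rfl | rfl
      · rw [dI_rS] at hlt
        exact absurd (lt_of_le_of_lt (degree_pos C rS) hlt) (lt_irrefl 1)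
      · have := hsame r1 (Or.inl hr1P) (by rw [hr1m, hrankM])
        have h2 := hdegJ r1 (Or.inl hr1P)
        omega

lemma part3aux {sem : Sem} {j : ℕ∞} (hj : (1 : ℕ∞) ≤ j) {P Q : OptProblem U}
    (hseqv : seqv sem 1 j P Q) (hμ : outcomes sem P = outcomes sem Q)
    {I J : Set U} (hI : I ∈ outcomes sem P) (hJ : J ∈ outcomes sem P)
    (hlt : diff P I J < diff Q I J)
    (hnb : ¬ (j < diff P I J ∧ j < diff Q I J)) : False := by
  have hne_top : diff P I J ≠ ⊤ := ne_top_of_lt hlt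
  obtain ⟨m, hm⟩ := WithTop.ne_top_iff_exists.mp hne_top
  have hmj : (m : ℕ∞) ≤ j := by
    by_contra h
    push_neg at h
    exact hnb ⟨hm ▸ h, lt_trans (hm ▸ h) hlt⟩
  have hE : Epred P I J m := Epred_of_diff_eq hm.symm le_rfl
  have hNE : ¬ Epred P I J (m + 1) := by
    intro h
    have := (Epred_iff_le_diff P I J (m + 1)).mp h
    rw [← hm] at this
    have := Nat.cast_le.mp this
    omega
  have hm1 : 1 ≤ m := by
    have hE1 : Epred P I J 1 := fun r hr hrk => absurd hrk (by have := r.rank_pos; omega)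
    have := (Epred_iff_le_diff P I J 1).mp hE1
    rw [← hm] at this
    exact Nat.one_le_cast.mp this
  have hEQ : Epred Q I J (m + 1) := by
    apply (Epred_iff_le_diff Q I J (m + 1)).mpr
    have h1 : (m : ℕ∞) < diff Q I J := lt_of_le_of_lt (le_of_eq hm) hlt
    have h2 : (m : ℕ∞) + 1 ≤ diff Q I J := Order.add_one_le_of_lt h1
    push_cast
    exact h2
  unfold Epred at hNE
  push_neg at hNE
  obtain ⟨r1, hr1P, hrk, hne⟩ := hNE
  have hr1m : r1.rank = m := by
    by_contra h
    exact hne (hE r1 hr1P (by omega))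
  rcases hne.lt_or_gt with hlt1 | hlt1
  · exact part3core hj hseqv hμ hI hJ hm1 hmj hE hEQ hr1P hr1m hlt1
  · exact part3core hj hseqv hμ hJ hI hm1 hmj (Epred_symm hE) (Epred_symm hEQ) hr1P hr1m hlt1

lemma part3 {sem : Sem} {j : ℕ∞} (hj : (1 : ℕ∞) ≤ j) {P Q : OptProblem U}
    (hseqv : seqv sem 1 j P Q) (hμ : outcomes sem P = outcomes sem Q)
    {I J : Set U} (hI : I ∈ outcomes sem P) (hJ : J ∈ outcomes sem P) :
    diff P I J = diff Q I J ∨ (j < diff P I J ∧ j < diff Q I J) := by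
  by_contra h
  push_neg at h
  obtain ⟨hne, hnb⟩ := h
  rcases hne.lt_or_gt with hlt | hlt
  · exact part3aux hj hseqv hμ hI hJ hlt (by rintro ⟨a, b⟩; exact absurd b (hnb a).not_gt)
  · exact part3aux hj (fun R h1 h2 => (hseqv R h1 h2).symm) hμ.symm (hμ ▸ hI) (hμ ▸ hJ) hlt
      (by rintro ⟨a, b⟩; exact absurd a (hnb b).not_gt)
end AuxP3
section AuxBack
variable {U : Type}

lemma gt_witness_diff {P : OptProblem U} {I J : Set U} {w : Rule U}
    (hw : w ∈ P.sel) (hlt : degree J w < degree I w)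
    (hlow : ∀ r ∈ P.sel, r.rank < w.rank → degree J r = degree I r) :
    diff P J I = (w.rank : ℕ∞) :=
  diff_eq_coe (fun r hr hrk => hlow r hr hrk)
    (fun h => absurd (h w hw (by omega)) (by omega))

lemma back {sem : Sem} {j : ℕ∞} {P Q : OptProblem U}
    (hrel : ∀ A B : Set U, A ∈ outcomes sem P → B ∈ outcomes sem P →
      (gtSel P.sel A B ↔ gtSel Q.sel A B))
    (hdiff : ∀ A ∈ outcomes sem P, ∀ B ∈ outcomes sem P,
      diff P A B = diff Q A B ∨ (j < diff P A B ∧ j < diff Q A B))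
    {S : Set (Rule U)} (hS : inRankInterval 1 j S)
    {I J : Set U} (hI : I ∈ outcomes sem P) (hJ : J ∈ outcomes sem P)
    (hgt : gtSel (P.sel ∪ S) J I) : gtSel (Q.sel ∪ S) J I := by
  obtain ⟨w, hw, hlt, hsame, hlow⟩ := hgt
  rcases hw with hwP | hwS
  · -- witness in P.sel
    have hgtP : gtSel P.sel J I :=
      ⟨w, hwP, hlt, fun r hr hrk => hsame r (Or.inl hr) hrk,
        fun r hr hrk => hlow r (Or.inl hr) hrk⟩
    obtain ⟨q, hq, hqlt, hqsame, hqlow⟩ := (hrel J I hJ hI).mp hgtP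
    have hdP : diff P J I = (w.rank : ℕ∞) :=
      gt_witness_diff hwP hlt (fun r hr hrk => hlow r (Or.inl hr) hrk)
    have hdQ : diff Q J I = (q.rank : ℕ∞) := gt_witness_diff hq hqlt hqlow
    rcases hdiff J hJ I hI with heq | ⟨hj1, hj2⟩
    · have hqr : q.rank = w.rank := by
        have : (q.rank : ℕ∞) = (w.rank : ℕ∞) := by rw [← hdQ, ← heq, hdP]
        exact_mod_cast this
      refine ⟨q, Or.inl hq, hqlt, ?_, ?_⟩
      · rintro r (hrQ | hrS) hrk
        · exact hqsame r hrQ hrk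
        · exact hsame r (Or.inr hrS) (by rw [hrk, hqr])
      · rintro r (hrQ | hrS) hrk
        · exact hqlow r hrQ hrk
        · exact hlow r (Or.inr hrS) (by rw [← hqr]; exact hrk)
    · -- all S rules have rank ≤ j < w.rank, q.rank
      have hSw : ∀ s ∈ S, s.rank < w.rank := by
        intro s hs
        have h1 : (s.rank : ℕ∞) ≤ j := (hS s hs).2
        have h2 : (s.rank : ℕ∞) < (w.rank : ℕ∞) := lt_of_le_of_lt h1 (hdP ▸ hj1)
        exact_mod_cast h2
      have hSq : ∀ s ∈ S, s.rank < q.rank := by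
        intro s hs
        have h1 : (s.rank : ℕ∞) ≤ j := (hS s hs).2
        have h2 : (s.rank : ℕ∞) < (q.rank : ℕ∞) := lt_of_le_of_lt h1 (hdQ ▸ hj2)
        exact_mod_cast h2
      refine ⟨q, Or.inl hq, hqlt, ?_, ?_⟩
      · rintro r (hrQ | hrS) hrk
        · exact hqsame r hrQ hrk
        · exact absurd hrk (by have := hSq r hrS; omega)
      · rintro r (hrQ | hrS) hrk
        · exact hqlow r hrQ hrk
        · exact hlow r (Or.inr hrS) (hSw r hrS)
  · -- witness in S
    have hmj : (w.rank : ℕ∞) ≤ j := (hS w hwS).2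
    by_cases hE1 : ∀ r ∈ P.sel, r.rank = w.rank → degree J r = degree I r
    · have hEP : Epred P J I (w.rank + 1) := by
        intro r hr hrk
        rcases lt_or_eq_of_le (Nat.lt_succ_iff.mp hrk) with h | h
        · exact hlow r (Or.inl hr) h
        · exact hE1 r hr h
      have h1 : ((w.rank + 1 : ℕ) : ℕ∞) ≤ diff P J I :=
        (Epred_iff_le_diff P J I (w.rank + 1)).mp hEP
      have h2 : ((w.rank + 1 : ℕ) : ℕ∞) ≤ diff Q J I := by
        rcases hdiff J hJ I hI with heq | ⟨hj1, hj2⟩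
        · rw [← heq]; exact h1
        · have h3 : (w.rank : ℕ∞) < diff Q J I := lt_of_le_of_lt hmj hj2
          have h4 := Order.add_one_le_of_lt h3
          push_cast
          exact h4
      have hEQ : Epred Q J I (w.rank + 1) := (Epred_iff_le_diff Q J I _).mpr h2
      refine ⟨w, Or.inr hwS, hlt, ?_, ?_⟩
      · rintro r (hrQ | hrS) hrk
        · exact le_of_eq (hEQ r hrQ (by omega))
        · exact hsame r (Or.inr hrS) hrk
      · rintro r (hrQ | hrS) hrk
        · exact hEQ r hrQ (by omega)
        · exact hlow r (Or.inr hrS) hrk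
    · push_neg at hE1
      obtain ⟨r0, hr0, hr0m, hne⟩ := hE1
      have hr0lt : degree J r0 < degree I r0 :=
        lt_of_le_of_ne (hsame r0 (Or.inl hr0) hr0m) hne
      have hgtP : gtSel P.sel J I :=
        ⟨r0, hr0, hr0lt, fun r hr hrk => hsame r (Or.inl hr) (by rw [hrk, hr0m]),
          fun r hr hrk => hlow r (Or.inl hr) (by rw [← hr0m]; exact hrk)⟩
      obtain ⟨q, hq, hqlt, hqsame, hqlow⟩ := (hrel J I hJ hI).mp hgtP
      have hdP : diff P J I = (r0.rank : ℕ∞) :=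
        gt_witness_diff hr0 hr0lt
          (fun r hr hrk => hlow r (Or.inl hr) (by rw [← hr0m]; exact hrk))
      have hdQ : diff Q J I = (q.rank : ℕ∞) := gt_witness_diff hq hqlt hqlow
      have heq : diff P J I = diff Q J I := by
        rcases hdiff J hJ I hI with heq | ⟨hj1, hj2⟩
        · exact heq
        · exact absurd (lt_of_lt_of_le (hdP ▸ hj1) (hr0m ▸ hmj : (r0.rank : ℕ∞) ≤ j))
            (lt_irrefl j)
      have hqr : q.rank = w.rank := by
        have : (q.rank : ℕ∞) = (r0.rank : ℕ∞) := by rw [← hdQ, ← heq, hdP]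
        have h5 : q.rank = r0.rank := by exact_mod_cast this
        rw [h5, hr0m]
      refine ⟨q, Or.inl hq, hqlt, ?_, ?_⟩
      · rintro r (hrQ | hrS) hrk
        · exact hqsame r hrQ hrk
        · exact hsame r (Or.inr hrS) (by rw [hrk, hqr])
      · rintro r (hrQ | hrS) hrk
        · exact hqlow r hrQ hrk
        · exact hlow r (Or.inr hrS) (by rw [← hqr]; exact hrk)
end AuxBack
/-- Corollary 3: characterization of `P ≡^{s,[1,j]} Q`. -/
theorem stmt2 {U : Type} [Countable U] (sem : Sem) (P Q : OptProblem U)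
    (j : ℕ∞) (hj : (1 : ℕ∞) ≤ j) :
    seqv sem 1 j P Q ↔
      (outcomes sem P = outcomes sem Q ∧
       restrictRel (gtSel P.sel) (outcomes sem P) =
         restrictRel (gtSel Q.sel) (outcomes sem Q) ∧
       (∀ I ∈ outcomes sem P, ∀ J ∈ outcomes sem P,
         diff P I J = diff Q I J ∨ (j < diff P I J ∧ j < diff Q I J))) := by
  constructor
  · intro hseqv
    have hseqv' : seqv sem 1 j Q P := fun R h1 h2 => (hseqv R h1 h2).symm
    have hμ : outcomes sem P = outcomes sem Q :=
      Set.Subset.antisymm (part1 hj hseqv) (part1 hj hseqv')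
    refine ⟨hμ, ?_, fun I hI J hJ => part3 hj hseqv hμ hI hJ⟩
    funext A B
    apply propext
    constructor
    · rintro ⟨hgt, hA, hB⟩
      exact ⟨part2 hj hseqv hμ hB hA hgt, hμ ▸ hA, hμ ▸ hB⟩
    · rintro ⟨hgt, hA, hB⟩
      exact ⟨part2 hj hseqv' hμ.symm (hμ.symm ▸ hB) (hμ.symm ▸ hA) hgt,
        hμ.symm ▸ hA, hμ.symm ▸ hB⟩
  · rintro ⟨hμ, hrelEq, hdiff⟩
    have hrel : ∀ A B : Set U, A ∈ outcomes sem P → B ∈ outcomes sem P →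
        (gtSel P.sel A B ↔ gtSel Q.sel A B) := by
      intro A B hA hB
      have hiff : restrictRel (gtSel P.sel) (outcomes sem P) A B ↔
          restrictRel (gtSel Q.sel) (outcomes sem Q) A B :=
        iff_of_eq (congrFun (congrFun hrelEq A) B)
      constructor
      · intro h; exact (hiff.mp ⟨h, hA, hB⟩).1
      · intro h; exact (hiff.mpr ⟨h, hμ ▸ hA, hμ ▸ hB⟩).1
    have hrel' : ∀ A B : Set U, A ∈ outcomes sem Q → B ∈ outcomes sem Q →
        (gtSel Q.sel A B ↔ gtSel P.sel A B) := by
      intro A B hA hB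
      exact (hrel A B (hμ.symm ▸ hA) (hμ.symm ▸ hB)).symm
    have hdiff' : ∀ A ∈ outcomes sem Q, ∀ B ∈ outcomes sem Q,
        diff Q A B = diff P A B ∨ (j < diff Q A B ∧ j < diff P A B) := by
      intro A hA B hB
      rcases hdiff A (hμ.symm ▸ hA) B (hμ.symm ▸ hB) with h | ⟨h1, h2⟩
      · exact Or.inl h.symm
      · exact Or.inr ⟨h2, h1⟩
    have toQ : ∀ {X : Set U}, X ∈ outcomes sem P → X ∈ outcomes sem Q :=
      fun {X} h => hμ ▸ h
    have toP : ∀ {X : Set U}, X ∈ outcomes sem Q → X ∈ outcomes sem P :=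
      fun {X} h => hμ.symm ▸ h
    intro R hgen hint
    ext I
    rw [mem_pref_union hgen, mem_pref_union hgen]
    constructor
    · rintro ⟨hI, hno⟩
      refine ⟨toQ hI, ?_⟩
      rintro ⟨J, hJ, hgt⟩
      exact hno ⟨J, toP hJ, back hrel' hdiff' hint (toQ hI) hJ hgt⟩
    · rintro ⟨hI, hno⟩
      refine ⟨toP hI, ?_⟩
      rintro ⟨J, hJ, hgt⟩
      exact hno ⟨J, toQ hJ, back hrel hdiff hint (toP hI) hJ hgt⟩
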